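/- arXiv:1702.06775 — 3 statements merged into one kernel-verified Lean document; each statement's English description precedes it below -/
import Mathlib

section
/- Let K ⊆ L be a field extension and let G be a group. If V is a finite-dimensional K-linear representation of G such that the scalar extension L ⊗_K V is a semisimple L[G]-module, then V is a semisimple K[G]-module. -/
open TensorProduct

/-- The base change of a representation `ρ : G → GL_K(V)` along a field
extension `K ⊆ L`, acting on `L ⊗[K] V`. -/
noncomputable def repBaseChange {K L G V : Type*} [Field K] [Field L]
    [Algebra K L] [Group G] [AddCommGroup V] [Module K V]
    (ρ : Representation K G V) : Representation L G (L ⊗[K] V) where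
  toFun g := (ρ g).baseChange L
  map_one' := by ext; simp
  map_mul' g h := by ext; simp

section Aux

variable {k G V : Type*} [CommSemiring k] [Monoid G] [AddCommMonoid V] [Module k V]
  (ρ : Representation k G V)

/-- A `k`-linear map commuting with the `G`-action commutes with the whole
monoid algebra action. -/
lemma aux_comm_asAlgebraHom (f : V →ₗ[k] V)
    (hf : ∀ g v, f (ρ g v) = ρ g (f v)) (r : MonoidAlgebra k G) (v : V) :
    f (ρ.asAlgebraHom r v) = ρ.asAlgebraHom r (f v) := by
  induction r using MonoidAlgebra.induction_linear with
  | zero => simp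
  | add a b ha hb => simp only [map_add, LinearMap.add_apply, ha, hb]
  | single g c =>
      simp only [Representation.asAlgebraHom_single, LinearMap.smul_apply, map_smul, hf]

/-- A `G`-stable subspace is stable under the whole monoid algebra action. -/
lemma aux_mem_asAlgebraHom (W : Submodule k V)
    (hW : ∀ g, ∀ v ∈ W, ρ g v ∈ W) (r : MonoidAlgebra k G) {v : V} (hv : v ∈ W) :
    ρ.asAlgebraHom r v ∈ W := by
  induction r using MonoidAlgebra.induction_linear with
  | zero => simp
  | add a b ha hb => rw [map_add, LinearMap.add_apply]; exact W.add_mem ha hb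
  | single g c =>
      rw [Representation.asAlgebraHom_single, LinearMap.smul_apply]
      exact W.smul_mem _ (hW g v hv)

lemma aux_algebraMap_smul_asModule (c : k) (x : ρ.asModule) :
    (algebraMap k (MonoidAlgebra k G) c) • x = c • (x : V) := by
  show ρ.asAlgebraHom _ x = _
  rw [AlgHom.commutes]
  rfl

lemma aux_of_smul_asModule (g : G) (x : ρ.asModule) :
    (MonoidAlgebra.of k G g) • x = ρ g (x : V) := by
  show ρ.asAlgebraHom _ x = _
  rw [Representation.asAlgebraHom_of]

end Aux

set_option maxHeartbeats 2000000 in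
/-- Descent of semisimplicity along a field extension: if `L ⊗_K V` is a
semisimple `L[G]`-module, then the finite-dimensional representation `V` is a
semisimple `K[G]`-module. -/
theorem isSemisimple_of_baseChange_isSemisimple (K L : Type*) [Field K] [Field L]
    [Algebra K L] (G : Type*) [Group G]
    (V : Type*) [AddCommGroup V] [Module K V] [FiniteDimensional K V]
    (ρ : Representation K G V)
    (h : IsSemisimpleModule (MonoidAlgebra L G)
      (Representation.asModule (repBaseChange (L := L) ρ))) :
    IsSemisimpleModule (MonoidAlgebra K G) ρ.asModule := by
  classical
  -- a `K`-linear retraction `φ : L → K` with `φ 1 = 1`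
  obtain ⟨φ, hφ⟩ := (Algebra.linearMap K L).exists_leftInverse_of_injective
    (LinearMap.ker_eq_bot.mpr (algebraMap K L).injective)
  have hφ1 : φ 1 = 1 := by
    have := LinearMap.congr_fun hφ (1 : K)
    simpa using this
  -- the contraction `Λ : L ⊗ V → V`, `l ⊗ v ↦ φ l • v`
  set Λ : L ⊗[K] V →ₗ[K] V :=
    (TensorProduct.lid K V).toLinearMap ∘ₗ TensorProduct.map φ LinearMap.id with hΛdef
  have hΛt : ∀ (l : L) (v : V), Λ (l ⊗ₜ[K] v) = φ l • v := by
    intro l v; simp [hΛdef]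
  set ρL := repBaseChange (L := L) ρ with hρL
  refine (isSemisimpleModule_iff _ _).mpr ⟨fun p => ?_⟩
  -- the underlying `G`-stable `K`-subspace of `p`
  set W : Submodule K V :=
    { carrier := (p : Set ρ.asModule)
      add_mem' := fun ha hb => p.add_mem ha hb
      zero_mem' := p.zero_mem
      smul_mem' := fun c x hx => by
        show c • x ∈ (p : Set ρ.asModule)
        have hmem := p.smul_mem (algebraMap K (MonoidAlgebra K G) c) hx
        have heq := aux_algebraMap_smul_asModule ρ c x
        rw [heq] at hmem
        exact hmem } with hWdef
  have hmemW : ∀ v : V, v ∈ W ↔ (v : ρ.asModule) ∈ p := fun v => Iff.rfl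
  have hW : ∀ (g : G), ∀ v ∈ W, ρ g v ∈ W := by
    intro g v hv
    rw [hmemW]
    have hmem := p.smul_mem (MonoidAlgebra.of K G g) ((hmemW v).mp hv)
    have heq := aux_of_smul_asModule ρ g v
    rw [heq] at hmem
    exact hmem
  -- base change of `W`
  set WL : Submodule L (L ⊗[K] V) := W.baseChange L with hWLdef
  have key : ∀ (u : V →ₗ[K] V), (∀ v ∈ W, u v ∈ W) →
      ∀ x ∈ WL, u.baseChange L x ∈ WL := by
    intro u hu x hx
    refine Submodule.span_induction (p := fun x _ => u.baseChange L x ∈ WL)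
      ?_ ?_ ?_ ?_ (by rwa [hWLdef, Submodule.baseChange_eq_span] at hx)
    · rintro _ ⟨w, hw, rfl⟩
      simpa using Submodule.tmul_mem_baseChange_of_mem (1 : L) (hu w hw)
    · simp
    · intro a b _ _ ha hb; rw [map_add]; exact WL.add_mem ha hb
    · intro l a _ ha; rw [map_smul]; exact WL.smul_mem l ha
  have hWL : ∀ (g : G), ∀ x ∈ WL, ρL g x ∈ WL := fun g x hx => key (ρ g) (hW g) x hx
  -- `WL` as a submodule over the monoid algebra
  set pL : Submodule (MonoidAlgebra L G) ρL.asModule :=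
    { carrier := (WL : Set (L ⊗[K] V))
      add_mem' := fun ha hb => WL.add_mem ha hb
      zero_mem' := WL.zero_mem
      smul_mem' := fun r x hx => by
        show ρL.asAlgebraHom r x ∈ WL
        exact aux_mem_asAlgebraHom ρL WL hWL r hx } with hpLdef
  have hmemWL : ∀ x : L ⊗[K] V, x ∈ WL ↔ (x : ρL.asModule) ∈ pL := fun x => Iff.rfl
  haveI := (isSemisimpleModule_iff _ _).mp h
  obtain ⟨q, hq⟩ := exists_isCompl pL
  set π := @Submodule.projectionOnto (MonoidAlgebra L G) _ ρL.asModule _ _ pL q hq with hπdef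
  have hπ : ∀ (x : ρL.asModule) (hx : x ∈ pL), π x = ⟨x, hx⟩ := fun x hx =>
    Submodule.projectionOnto_apply_left (E := ρL.asModule) hq ⟨x, hx⟩
  -- the `L`-linear, `G`-equivariant projection onto `WL`
  set FL : L ⊗[K] V →ₗ[L] L ⊗[K] V :=
    { toFun := fun x => ((π x).1 : L ⊗[K] V)
      map_add' := fun a b => by
        show ((π (a + b)).1 : L ⊗[K] V) = (π a).1 + (π b).1
        exact congrArg Subtype.val (map_add π (a : ρL.asModule) b)
      map_smul' := fun l x => by
        show ((π (l • x)).1 : L ⊗[K] V) = l • ((π x).1 : L ⊗[K] V)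
        have h1 : π (l • x) = (algebraMap L (MonoidAlgebra L G) l) • π x := by
          refine Eq.trans ?_ (map_smul π _ (show ρL.asModule from x))
          congr 1
          exact (aux_algebraMap_smul_asModule ρL l x).symm
        rw [h1]
        exact aux_algebraMap_smul_asModule ρL l (π x).1 } with hFLdef
  have hFLapp : ∀ x : L ⊗[K] V, FL x = ((π x).1 : L ⊗[K] V) := fun x => rfl
  have hFLrange : ∀ x : L ⊗[K] V, FL x ∈ WL := fun x => (π x).2
  have hFLfix : ∀ x ∈ WL, FL x = x := by
    intro x hx
    rw [hFLapp, hπ x hx]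
  have hFLcomm : ∀ (g : G) (x : L ⊗[K] V),
      FL ((ρ g).baseChange L x) = (ρ g).baseChange L (FL x) := by
    intro g x
    rw [hFLapp, hFLapp]
    have h1 : π ((ρ g).baseChange L x) = (MonoidAlgebra.of L G g) • π x := by
      refine Eq.trans ?_ (map_smul π _ (show ρL.asModule from x))
      congr 1
      exact (aux_of_smul_asModule ρL g x).symm
    rw [h1]
    exact aux_of_smul_asModule ρL g (π x).1
  -- the descended projection `f : V → V`
  set f : V →ₗ[K] V :=
    Λ ∘ₗ (FL.restrictScalars K) ∘ₗ (TensorProduct.mk K L V 1) with hfdef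
  have hfapp : ∀ v : V, f v = Λ (FL ((1 : L) ⊗ₜ[K] v)) := fun v => rfl
  have hΛW : ∀ x ∈ WL, Λ x ∈ W := by
    intro x hx
    set S : Submodule L (L ⊗[K] V) :=
      { carrier := {y | ∀ l : L, Λ (l • y) ∈ W}
        add_mem' := fun {a b} ha hb l => by
          rw [smul_add, map_add]; exact W.add_mem (ha l) (hb l)
        zero_mem' := fun l => by rw [smul_zero, map_zero]; exact W.zero_mem
        smul_mem' := fun c y hy l => by rw [smul_smul]; exact hy (l * c) } with hSdef
    have hle : WL ≤ S := by
      rw [hWLdef, Submodule.baseChange_eq_span]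
      refine Submodule.span_le.mpr ?_
      rintro _ ⟨w, hw, rfl⟩ l
      have heq : l • ((TensorProduct.mk K L V 1) w) = l ⊗ₜ[K] w := by
        rw [TensorProduct.mk_apply, smul_tmul', smul_eq_mul, mul_one]
      rw [heq, hΛt]
      exact W.smul_mem _ hw
    have := hle hx (1 : L)
    rwa [one_smul] at this
  have hfW : ∀ v : V, f v ∈ W := fun v => by
    rw [hfapp]; exact hΛW _ (hFLrange _)
  have hffix : ∀ v ∈ W, f v = v := by
    intro v hv
    rw [hfapp, hFLfix _ (Submodule.tmul_mem_baseChange_of_mem (1 : L) hv), hΛt, hφ1,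
      one_smul]
  have hΛcomm : ∀ (g : G) (y : L ⊗[K] V), Λ ((ρ g).baseChange L y) = ρ g (Λ y) := by
    intro g y
    induction y using TensorProduct.induction_on with
    | zero => simp
    | tmul l w => rw [LinearMap.baseChange_tmul, hΛt, hΛt, map_smul]
    | add a b ha hb => simp only [map_add, ha, hb]
  have hfcomm : ∀ (g : G) (v : V), f (ρ g v) = ρ g (f v) := by
    intro g v
    rw [hfapp, hfapp]
    have h1 : (1 : L) ⊗ₜ[K] (ρ g v) = (ρ g).baseChange L ((1 : L) ⊗ₜ[K] v) := by
      rw [LinearMap.baseChange_tmul]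
    rw [h1, hFLcomm, hΛcomm]
  -- assemble the `K[G]`-linear projection onto `p`
  set π₀ : ρ.asModule →ₗ[MonoidAlgebra K G] p :=
    { toFun := fun x => ⟨f x, (hmemW (f x)).mp (hfW x)⟩
      map_add' := fun a b => Subtype.ext (map_add f a b)
      map_smul' := fun r x => by
        refine Subtype.ext ?_
        show f (ρ.asAlgebraHom r x) = ρ.asAlgebraHom r (f x)
        exact aux_comm_asAlgebraHom ρ f hfcomm r x } with hπ₀def
  refine ⟨LinearMap.ker π₀, LinearMap.isCompl_of_proj ?_⟩
  intro x
  refine Subtype.ext ?_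
  show f (x : ρ.asModule) = (x : ρ.asModule)
  exact hffix _ ((hmemW _).mpr x.2)
end

section
/- Let K ⊆ L be fields and let 0 → V' → V → V'' → 0 be a short exact sequence of modules over a K-algebra A. If the extension splits after applying L ⊗_K (−), i.e., the sequence of L ⊗_K A-modules 0 → L⊗V' → L⊗V → L⊗V'' → 0 splits, and V'' is finitely presented, then the original sequence splits over A. -/
open TensorProduct

/-- Descent of splittings along a field extension `K ⊆ L`: a short exact
sequence `0 → V' → V → V'' → 0` of modules over a `K`-algebra `A`, with `V''`
finitely presented, splits over `A` provided it splits after applying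
`L ⊗[K] (−)` (compatibly with the `A`-actions). -/
theorem splits_of_baseChange_splits
    (K L : Type*) [Field K] [Field L] [Algebra K L]
    (A : Type*) [Ring A] [Algebra K A]
    (V' V V'' : Type*)
    [AddCommGroup V'] [Module K V'] [Module A V'] [IsScalarTower K A V']
    [SMulCommClass A K V']
    [AddCommGroup V] [Module K V] [Module A V] [IsScalarTower K A V]
    [SMulCommClass A K V]
    [AddCommGroup V''] [Module K V''] [Module A V''] [IsScalarTower K A V'']
    [SMulCommClass A K V'']
    (f : V' →ₗ[A] V) (g : V →ₗ[A] V'')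
    (hf : Function.Injective f) (hg : Function.Surjective g)
    (hexact : Function.Exact f g)
    (hfp : Module.FinitePresentation A V'')
    (hsplit : ∃ s : L ⊗[K] V'' →ₗ[L] L ⊗[K] V,
      ((g.restrictScalars K).baseChange L) ∘ₗ s = LinearMap.id ∧
      ∀ a : A, s ∘ₗ (Module.toModuleEnd K V'' a).baseChange L
        = ((Module.toModuleEnd K V a).baseChange L) ∘ₗ s) :
    ∃ r : V →ₗ[A] V', r ∘ₗ f = LinearMap.id := by
  obtain ⟨s, hs1, hs2⟩ := hsplit
  -- a K-linear functional on L sending 1 to 1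
  obtain ⟨lam, hlam⟩ : ∃ lam : L →ₗ[K] K, lam 1 = 1 := by
    have h1 : LinearIndependent K (fun x => (x : L) : ({1} : Set L) → L) :=
      LinearIndepOn.singleton (v := id) one_ne_zero
    let b := Module.Basis.extend h1
    have hmem : (1 : L) ∈ LinearIndepOn.extend (show LinearIndepOn K id ({1} : Set L) from h1) (Set.subset_univ _) :=
      Module.Basis.subset_extend h1 rfl
    refine ⟨(Finsupp.lapply ⟨1, hmem⟩) ∘ₗ b.repr.toLinearMap, ?_⟩
    have h := Module.Basis.extend_apply_self h1 ⟨1, hmem⟩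
    simp only [LinearMap.comp_apply, LinearEquiv.coe_toLinearMap, Finsupp.lapply_apply]
    have h2 := congrArg b.repr h
    rw [b.repr_self] at h2
    rw [← h2, Finsupp.single_eq_same]
  -- projection maps
  let πV : L ⊗[K] V →ₗ[K] V :=
    TensorProduct.lift ((LinearMap.lsmul K V).comp lam)
  let πV'' : L ⊗[K] V'' →ₗ[K] V'' :=
    TensorProduct.lift ((LinearMap.lsmul K V'').comp lam)
  have πV_tmul : ∀ (l : L) (v : V), πV (l ⊗ₜ[K] v) = lam l • v := fun l v => rfl
  have πV''_tmul : ∀ (l : L) (v : V''), πV'' (l ⊗ₜ[K] v) = lam l • v := fun l v => rfl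
  -- πV is A-equivariant w.r.t. the base-changed action
  have πV_equiv : ∀ (a : A) (w : L ⊗[K] V),
      πV (((Module.toModuleEnd K V a).baseChange L) w) = a • πV w := by
    intro a w
    induction w using TensorProduct.induction_on with
    | zero => simp
    | tmul l v =>
        simp only [LinearMap.baseChange_tmul, πV_tmul]
        exact (smul_comm _ _ _)
    | add x y hx hy => rw [map_add, map_add, hx, hy, map_add, smul_add]
  -- g commutes with the projections
  have g_proj : ∀ w : L ⊗[K] V, g (πV w) = πV'' (((g.restrictScalars K).baseChange L) w) := by
    intro w
    induction w using TensorProduct.induction_on with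
    | zero => simp
    | tmul l v => simp [πV_tmul, πV''_tmul, map_smul]
    | add x y hx hy => simp [map_add, hx, hy]
  -- the section over A
  let σK : V'' →ₗ[K] V :=
    πV ∘ₗ (s.restrictScalars K) ∘ₗ ((TensorProduct.mk K L V'') 1)
  have σK_apply : ∀ x : V'', σK x = πV (s ((1 : L) ⊗ₜ[K] x)) := fun x => rfl
  have σ_smul : ∀ (a : A) (x : V''), σK (a • x) = a • σK x := by
    intro a x
    have h1 : (1 : L) ⊗ₜ[K] (a • x)
        = ((Module.toModuleEnd K V'' a).baseChange L) ((1 : L) ⊗ₜ[K] x) := by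
      simp [Module.toModuleEnd]
      rfl
    rw [σK_apply, h1, ← LinearMap.comp_apply s, hs2 a]
    simp only [LinearMap.comp_apply]
    rw [πV_equiv]
    rfl
  let σ : V'' →ₗ[A] V :=
    { toFun := σK
      map_add' := σK.map_add
      map_smul' := σ_smul }
  have hσ : ∀ x : V'', g (σ x) = x := by
    intro x
    show g (σK x) = x
    rw [σK_apply, g_proj, ← LinearMap.comp_apply, hs1]
    simp [πV''_tmul, hlam]
  -- now build the retraction
  let p : V →ₗ[A] V := LinearMap.id - σ ∘ₗ g
  have hp : ∀ v : V, p v ∈ LinearMap.range f := by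
    intro v
    have : g (p v) = 0 := by
      simp [p, hσ (g v)]
    rw [LinearMap.exact_iff] at hexact
    rw [← hexact]
    exact this
  let e := LinearEquiv.ofInjective f hf
  refine ⟨e.symm.toLinearMap ∘ₗ p.codRestrict (LinearMap.range f) hp, ?_⟩
  ext v
  apply hf
  simp only [LinearMap.comp_apply, LinearMap.id_apply, LinearEquiv.coe_toLinearMap]
  have : ∀ y : LinearMap.range f, f (e.symm y) = y := by
    intro y
    have := e.apply_symm_apply y
    exact congrArg Subtype.val this
  rw [this]
  show p (f v) = f v
  have hg0 : g (f v) = 0 := hexact.apply_apply_eq_zero v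
  simp [p, hg0]
end

section
/- Let G be a group, K ⊆ L fields, and V', V'' finite-dimensional K-representations of G. The natural map L ⊗_K Ext¹_{K[G]}(V'', V') → Ext¹_{L[G]}(L ⊗ V'', L ⊗ V') is injective; hence a K[G]-extension of V'' by V' that splits after base change to L splits over K. -/
open TensorProduct

/-- The `K`-linear retraction `L ⊗[K] W → W` induced by a functional `lam : L →ₗ[K] K`. -/
noncomputable def tensorRetract (K L : Type*) [Field K] [Field L] [Algebra K L]
    (lam : L →ₗ[K] K) (W : Type*) [AddCommGroup W] [Module K W] :
    L ⊗[K] W →ₗ[K] W :=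
  (TensorProduct.lid K W).toLinearMap ∘ₗ TensorProduct.map lam LinearMap.id

theorem tensorRetract_tmul (K L : Type*) [Field K] [Field L] [Algebra K L]
    (lam : L →ₗ[K] K) (W : Type*) [AddCommGroup W] [Module K W] (l : L) (w : W) :
    tensorRetract K L lam W (l ⊗ₜ w) = lam l • w := by
  simp [tensorRetract]

theorem tensorRetract_baseChange (K L : Type*) [Field K] [Field L] [Algebra K L]
    (lam : L →ₗ[K] K) {W₁ W₂ : Type*} [AddCommGroup W₁] [Module K W₁]
    [AddCommGroup W₂] [Module K W₂] (h : W₁ →ₗ[K] W₂) (z : L ⊗[K] W₁) :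
    tensorRetract K L lam W₂ (h.baseChange L z) = h (tensorRetract K L lam W₁ z) := by
  induction z using TensorProduct.induction_on with
  | zero => simp
  | tmul l w => simp [tensorRetract_tmul]
  | add a b ha hb => simp [map_add, ha, hb]

/-- Injectivity of `L ⊗_K Ext¹_{K[G]}(V'', V') → Ext¹_{L[G]}(L ⊗ V'', L ⊗ V')`,
stated concretely on extension classes: a `K[G]`-extension
`0 → V' → V → V'' → 0` of finite-dimensional representations that splits after
base change to `L` already splits over `K`. -/
theorem rep_extension_splits_of_baseChange_splits
    (K L : Type*) [Field K] [Field L] [Algebra K L] (G : Type*) [Group G]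
    (V' V V'' : Type*) [AddCommGroup V'] [Module K V'] [FiniteDimensional K V']
    [AddCommGroup V] [Module K V]
    [AddCommGroup V''] [Module K V''] [FiniteDimensional K V'']
    (ρ' : Representation K G V') (ρ : Representation K G V)
    (ρ'' : Representation K G V'')
    (f : V' →ₗ[K] V) (g : V →ₗ[K] V'')
    (hf : Function.Injective f) (hg : Function.Surjective g)
    (hexact : Function.Exact f g)
    (hfequiv : ∀ x : G, f ∘ₗ ρ' x = ρ x ∘ₗ f)
    (hgequiv : ∀ x : G, g ∘ₗ ρ x = ρ'' x ∘ₗ g)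
    (hsplit : ∃ s : L ⊗[K] V'' →ₗ[L] L ⊗[K] V,
      (g.baseChange L) ∘ₗ s = LinearMap.id ∧
      ∀ x : G, s ∘ₗ repBaseChange (L := L) ρ'' x = repBaseChange (L := L) ρ x ∘ₗ s) :
    ∃ s : V'' →ₗ[K] V, g ∘ₗ s = LinearMap.id ∧ ∀ x : G, s ∘ₗ ρ'' x = ρ x ∘ₗ s := by
  obtain ⟨s, hs1, hs2⟩ := hsplit
  -- a `K`-linear functional `lam : L → K` with `lam 1 = 1`
  have hker : LinearMap.ker (LinearMap.toSpanSingleton K L 1) = ⊥ := by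
    rw [LinearMap.ker_eq_bot]
    intro a b hab
    simpa [LinearMap.toSpanSingleton_apply, Algebra.algebraMap_eq_smul_one] using
      (algebraMap K L).injective (by
        simpa [Algebra.algebraMap_eq_smul_one] using hab)
  obtain ⟨lam, hlam⟩ := (LinearMap.toSpanSingleton K L 1).exists_leftInverse_of_injective hker
  have hlam1 : lam 1 = 1 := by
    have := congrArg (fun φ => φ (1 : K)) hlam
    simpa [LinearMap.toSpanSingleton_apply] using this
  -- the candidate splitting
  set s₀ : V'' →ₗ[K] V :=
    tensorRetract K L lam V ∘ₗ (s.restrictScalars K) ∘ₗ (TensorProduct.mk K L V'' 1) with hs₀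
  refine ⟨s₀, ?_, ?_⟩
  · ext v
    have h1 : (g.baseChange L) (s (1 ⊗ₜ v)) = 1 ⊗ₜ v := congrArg (fun φ => φ (1 ⊗ₜ v)) hs1
    have := tensorRetract_baseChange K L lam g (s (1 ⊗ₜ v))
    rw [h1] at this
    simp only [hs₀, LinearMap.comp_apply, LinearMap.id_apply, LinearMap.restrictScalars_apply,
      TensorProduct.mk_apply]
    rw [← this, tensorRetract_tmul, hlam1, one_smul]
  · intro x
    ext v
    have hcomm : s (repBaseChange (L := L) ρ'' x (1 ⊗ₜ v)) =
        repBaseChange (L := L) ρ x (s (1 ⊗ₜ v)) :=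
      congrArg (fun φ => φ (1 ⊗ₜ v)) (hs2 x)
    have hρ'' : repBaseChange (L := L) ρ'' x (1 ⊗ₜ v) = 1 ⊗ₜ (ρ'' x v) := rfl
    have hρ : repBaseChange (L := L) ρ x (s (1 ⊗ₜ v)) = (ρ x).baseChange L (s (1 ⊗ₜ v)) := rfl
    simp only [hs₀, LinearMap.comp_apply, LinearMap.restrictScalars_apply,
      TensorProduct.mk_apply]
    rw [← hρ'', hcomm, hρ, tensorRetract_baseChange]
end
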